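/- Fix β > 0 and define C(γ) = Σ_{k ≥ 0} (β^k e^{−β}/k!) · log₂(1 + kγ) for γ > 0 (the large-system spectral efficiency of TH-CDMA with N_s = 1 and optimum decoding). Then, as γ → ∞, C(γ) − (1 − e^{−β}) log₂ γ converges to Σ_{k ≥ 1} (β^k e^{−β}/k!) · log₂ k. In particular the high-SNR slope is S_∞ = lim_{γ→∞} C(γ)/log₂ γ = 1 − e^{−β}, and the high-SNR decibel offset is L_∞ = log₂ β − (1 − e^{−β})^{−1} Σ_{k>1} (β^k e^{−β}/k!) log₂ k. -/

import Mathlib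

open Filter Real Topology

/-- The large-system spectral efficiency of TH-CDMA with `N_s = 1`, load `β`, and optimum
decoding: `C(γ) = Σ_{k≥0} (β^k e^{−β}/k!)·log₂(1 + kγ)` (the integral of `log₂(1+λγ)`
against a Poisson law with mean `β`). -/
noncomputable def thCapacity (β γ : ℝ) : ℝ :=
  ∑' k : ℕ, β ^ k * Real.exp (-β) / (Nat.factorial k : ℝ) * Real.logb 2 (1 + (k : ℝ) * γ)

namespace ThAux

noncomputable def p (β : ℝ) (k : ℕ) : ℝ := β ^ k * Real.exp (-β) / (Nat.factorial k : ℝ)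

lemma p_nonneg {β : ℝ} (hβ : 0 < β) (k : ℕ) : 0 ≤ p β k := by
  unfold p; positivity

lemma hasSum_p (β : ℝ) : HasSum (p β) 1 := by
  have h : HasSum (fun k : ℕ => β ^ k / (Nat.factorial k : ℝ)) (Real.exp β) := by
    rw [Real.exp_eq_exp_ℝ]
    exact NormedSpace.expSeries_div_hasSum_exp β
  have h2 := h.mul_right (Real.exp (-β))
  rw [← Real.exp_add, add_neg_cancel, Real.exp_zero] at h2
  refine h2.congr_fun fun k => by unfold p; ring

lemma summable_moment (β : ℝ) : Summable (fun k : ℕ => p β k * k) := by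
  rw [← summable_nat_add_iff 1]
  have h : Summable (fun k : ℕ => (β * Real.exp (-β)) * (β ^ k / (Nat.factorial k : ℝ))) :=
    (Real.summable_pow_div_factorial β).mul_left _
  refine h.congr fun k => ?_
  unfold p
  have hfac : ((Nat.factorial (k + 1) : ℝ)) = (k + 1) * (Nat.factorial k : ℝ) := by
    push_cast [Nat.factorial_succ]; ring
  have hk : (Nat.factorial k : ℝ) ≠ 0 := Nat.cast_ne_zero.2 (Nat.factorial_ne_zero k)
  rw [hfac]
  push_cast
  field_simp
  ring

lemma summable_bound {β : ℝ} (hβ : 0 < β) :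
    Summable (fun k : ℕ => p β k * k / Real.log 2) :=
  (summable_moment β).div_const _

/-- the shifted summand -/
noncomputable def q (β γ : ℝ) (k : ℕ) : ℝ :=
  if k = 0 then 0 else p β k * Real.logb 2 ((k : ℝ) + 1 / γ)

lemma summable_cap {β : ℝ} (hβ : 0 < β) {γ : ℝ} (hγ : 0 < γ) :
    Summable (fun k : ℕ => p β k * Real.logb 2 (1 + (k : ℝ) * γ)) := by
  have hlog2 : (0 : ℝ) < Real.log 2 := Real.log_pos one_lt_two
  refine Summable.of_nonneg_of_le (fun k => ?_) (fun k => ?_)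
    (((summable_moment β).mul_right γ).div_const (Real.log 2))
  · have h1 : (1 : ℝ) ≤ 1 + (k : ℝ) * γ := by
      have : (0 : ℝ) ≤ (k : ℝ) * γ := by positivity
      linarith
    exact mul_nonneg (p_nonneg hβ k) (Real.logb_nonneg one_lt_two h1)
  · have h1 : (0 : ℝ) < 1 + (k : ℝ) * γ := by positivity
    have hlog : Real.log (1 + (k : ℝ) * γ) ≤ (k : ℝ) * γ := by
      have := Real.log_le_sub_one_of_pos h1
      linarith
    have hb : Real.logb 2 (1 + (k : ℝ) * γ) ≤ (k : ℝ) * γ / Real.log 2 := by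
      rw [Real.logb]
      exact div_le_div_of_nonneg_right hlog hlog2.le
    calc p β k * Real.logb 2 (1 + (k : ℝ) * γ)
        ≤ p β k * ((k : ℝ) * γ / Real.log 2) :=
          mul_le_mul_of_nonneg_left hb (p_nonneg hβ k)
      _ = p β k * (k : ℝ) * γ / Real.log 2 := by ring

lemma q_bound {β : ℝ} (hβ : 0 < β) {γ : ℝ} (hγ : 1 ≤ γ) (k : ℕ) :
    ‖q β γ k‖ ≤ p β k * k / Real.log 2 := by
  have hlog2 : (0 : ℝ) < Real.log 2 := Real.log_pos one_lt_two
  rcases Nat.eq_zero_or_pos k with rfl | hk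
  · simp [q]
  · have hγ0 : (0 : ℝ) < γ := lt_of_lt_of_le one_pos hγ
    have hk1 : (1 : ℝ) ≤ (k : ℝ) := by exact_mod_cast hk
    have hx1 : (1 : ℝ) ≤ (k : ℝ) + 1 / γ := by
      have : (0 : ℝ) ≤ 1 / γ := by positivity
      linarith
    have hle : (k : ℝ) + 1 / γ ≤ (k : ℝ) + 1 := by
      have : 1 / γ ≤ 1 := by
        rw [div_le_one hγ0]; exact hγ
      linarith
    have hlognn : 0 ≤ Real.logb 2 ((k : ℝ) + 1 / γ) := Real.logb_nonneg one_lt_two hx1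
    rw [q, if_neg hk.ne']
    rw [Real.norm_eq_abs, abs_of_nonneg (mul_nonneg (p_nonneg hβ k) hlognn)]
    have hlog : Real.log ((k : ℝ) + 1 / γ) ≤ (k : ℝ) := by
      calc Real.log ((k : ℝ) + 1 / γ) ≤ Real.log ((k : ℝ) + 1) :=
            Real.log_le_log (by linarith) hle
        _ ≤ ((k : ℝ) + 1) - 1 := Real.log_le_sub_one_of_pos (by linarith)
        _ = (k : ℝ) := by ring
    have hb : Real.logb 2 ((k : ℝ) + 1 / γ) ≤ (k : ℝ) / Real.log 2 :=
      div_le_div_of_nonneg_right hlog hlog2.le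
    calc p β k * Real.logb 2 ((k : ℝ) + 1 / γ)
        ≤ p β k * ((k : ℝ) / Real.log 2) :=
          mul_le_mul_of_nonneg_left hb (p_nonneg hβ k)
      _ = p β k * (k : ℝ) / Real.log 2 := by ring

/-- the residual indicator sum -/
lemma hasSum_r (β : ℝ) :
    HasSum (fun k : ℕ => if k = 0 then 0 else p β k) (1 - Real.exp (-β)) := by
  have h0 : HasSum (fun k : ℕ => if k = 0 then p β k else 0) (p β 0) := by
    have : HasSum (fun k : ℕ => if k = 0 then p β 0 else 0) (p β 0) := hasSum_ite_eq 0 (p β 0)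
    refine this.congr_fun fun k => ?_
    by_cases hk : k = 0 <;> simp [hk]
  have := (hasSum_p β).sub h0
  have hp0 : p β 0 = Real.exp (-β) := by simp [p]
  rw [hp0] at this
  refine this.congr_fun fun k => ?_
  by_cases hk : k = 0 <;> simp [hk]

lemma key_eq {β : ℝ} (hβ : 0 < β) {γ : ℝ} (hγ : 1 ≤ γ) :
    thCapacity β γ - (1 - Real.exp (-β)) * Real.logb 2 γ = ∑' k, q β γ k := by
  have hγ0 : (0 : ℝ) < γ := lt_of_lt_of_le one_pos hγ
  have hs1 : Summable (fun k : ℕ => p β k * Real.logb 2 (1 + (k : ℝ) * γ)) :=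
    summable_cap hβ hγ0
  have hs2 : HasSum (fun k : ℕ => (if k = 0 then 0 else p β k) * Real.logb 2 γ)
      ((1 - Real.exp (-β)) * Real.logb 2 γ) := (hasSum_r β).mul_right _
  have : thCapacity β γ = ∑' k, p β k * Real.logb 2 (1 + (k : ℝ) * γ) := rfl
  rw [this, ← hs2.tsum_eq, ← Summable.tsum_sub hs1 hs2.summable]
  refine tsum_congr fun k => ?_
  rcases Nat.eq_zero_or_pos k with rfl | hk
  · simp [q]
  · rw [q, if_neg hk.ne', if_neg hk.ne']
    have hk0 : (0 : ℝ) < (k : ℝ) := by exact_mod_cast hk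
    have h1 : (1 : ℝ) + (k : ℝ) * γ ≠ 0 := by positivity
    have h2 : γ ≠ 0 := hγ0.ne'
    have : Real.logb 2 (1 + (k : ℝ) * γ) - Real.logb 2 γ
        = Real.logb 2 ((1 + (k : ℝ) * γ) / γ) := (Real.logb_div h1 h2).symm
    have hdiv : (1 + (k : ℝ) * γ) / γ = (k : ℝ) + 1 / γ := by field_simp; ring
    rw [← mul_sub, this, hdiv]

lemma tendsto_q (β : ℝ) (k : ℕ) :
    Tendsto (fun γ : ℝ => q β γ k) atTop (𝓝 (p β k * Real.logb 2 (k : ℝ))) := by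
  rcases Nat.eq_zero_or_pos k with rfl | hk
  · simp only [q, if_pos rfl]
    simp [Real.logb]
  · have hk0 : ((k : ℝ)) ≠ 0 := by exact_mod_cast hk.ne'
    have h1 : Tendsto (fun γ : ℝ => (k : ℝ) + 1 / γ) atTop (𝓝 ((k : ℝ))) := by
      have := tendsto_one_div_atTop_nhds_zero_nat (𝕜 := ℝ)
      have h2 : Tendsto (fun γ : ℝ => 1 / γ) atTop (𝓝 0) := by
        simpa [one_div] using tendsto_inv_atTop_zero
      simpa using tendsto_const_nhds.add h2
    have hlog : Tendsto (fun γ : ℝ => Real.log ((k : ℝ) + 1 / γ)) atTop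
        (𝓝 (Real.log (k : ℝ))) := ((Real.continuousAt_log hk0).tendsto).comp h1
    have : Tendsto (fun γ : ℝ => Real.logb 2 ((k : ℝ) + 1 / γ)) atTop
        (𝓝 (Real.logb 2 (k : ℝ))) := by
      simp only [Real.logb]
      exact hlog.div_const _
    have := this.const_mul (p β k)
    refine Tendsto.congr (fun γ => ?_) this
    simp [q, hk.ne']

lemma main_tendsto {β : ℝ} (hβ : 0 < β) :
    Tendsto (fun γ : ℝ => thCapacity β γ - (1 - Real.exp (-β)) * Real.logb 2 γ)
      atTop (𝓝 (∑' k : ℕ, p β k * Real.logb 2 (k : ℝ))) := by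
  have h := tendsto_tsum_of_dominated_convergence (𝓕 := atTop)
    (f := fun γ k => q β γ k) (g := fun k => p β k * Real.logb 2 (k : ℝ))
    (bound := fun k => p β k * k / Real.log 2)
    (summable_bound hβ) (tendsto_q β)
    (eventually_ge_atTop (1 : ℝ) |>.mono fun γ hγ k => q_bound hβ hγ k)
  refine h.congr' ?_
  filter_upwards [eventually_ge_atTop (1 : ℝ)] with γ hγ
  exact (key_eq hβ hγ).symm

end ThAux

/-- Fix `β > 0`.  As `γ → ∞`:
(i) `C(γ) − (1 − e^{−β})·log₂ γ → Σ_{k≥1} (β^k e^{−β}/k!)·log₂ k`;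
(ii) the high-SNR slope is `S_∞ = lim C(γ)/log₂ γ = 1 − e^{−β}`;
(iii) the high-SNR decibel offset `L_∞ = log₂ β + lim (log₂ γ − C(γ)/S_∞)` equals
`log₂ β − (1 − e^{−β})^{−1}·Σ_{k>1} (β^k e^{−β}/k!)·log₂ k`. -/
theorem thCapacity_high_snr (β : ℝ) (hβ : 0 < β) :
    Filter.Tendsto
        (fun γ : ℝ => thCapacity β γ - (1 - Real.exp (-β)) * Real.logb 2 γ)
        Filter.atTop
        (nhds (∑' k : ℕ, β ^ k * Real.exp (-β) / (Nat.factorial k : ℝ) *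
          Real.logb 2 (k : ℝ))) ∧
    Filter.Tendsto (fun γ : ℝ => thCapacity β γ / Real.logb 2 γ)
        Filter.atTop (nhds (1 - Real.exp (-β))) ∧
    Filter.Tendsto
        (fun γ : ℝ => Real.logb 2 β +
          (Real.logb 2 γ - thCapacity β γ / (1 - Real.exp (-β))))
        Filter.atTop
        (nhds (Real.logb 2 β - (1 - Real.exp (-β))⁻¹ *
          ∑' k : ℕ, if 2 ≤ k then
            β ^ k * Real.exp (-β) / (Nat.factorial k : ℝ) * Real.logb 2 (k : ℝ) else 0)) := by
  have hS : (0 : ℝ) < 1 - Real.exp (-β) := by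
    have : Real.exp (-β) < 1 := by
      rw [Real.exp_lt_one_iff]; linarith
    linarith
  have hi : Filter.Tendsto
      (fun γ : ℝ => thCapacity β γ - (1 - Real.exp (-β)) * Real.logb 2 γ)
      Filter.atTop
      (nhds (∑' k : ℕ, β ^ k * Real.exp (-β) / (Nat.factorial k : ℝ) *
        Real.logb 2 (k : ℝ))) := ThAux.main_tendsto hβ
  refine ⟨hi, ?_, ?_⟩
  · -- slope
    have hlogb : Tendsto (Real.logb 2) atTop atTop := Real.tendsto_logb_atTop one_lt_two
    have h0 : Tendsto (fun γ : ℝ =>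
        (thCapacity β γ - (1 - Real.exp (-β)) * Real.logb 2 γ) / Real.logb 2 γ)
        atTop (𝓝 0) := Tendsto.div_atTop hi hlogb
    have h1 := h0.add (tendsto_const_nhds (x := 1 - Real.exp (-β)) (f := atTop))
    rw [zero_add] at h1
    refine h1.congr' ?_
    have : ∀ᶠ γ : ℝ in atTop, Real.logb 2 γ ≠ 0 := by
      filter_upwards [hlogb.eventually_gt_atTop 0] with γ hγ
      exact hγ.ne'
    filter_upwards [this] with γ hγ
    field_simp
    ring
  · -- offset
    have htsum : (∑' k : ℕ, β ^ k * Real.exp (-β) / (Nat.factorial k : ℝ) *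
        Real.logb 2 (k : ℝ)) = ∑' k : ℕ, if 2 ≤ k then
          β ^ k * Real.exp (-β) / (Nat.factorial k : ℝ) * Real.logb 2 (k : ℝ) else 0 := by
      refine tsum_congr fun k => ?_
      by_cases hk : 2 ≤ k
      · rw [if_pos hk]
      · interval_cases k <;> simp [Real.logb]
    have h := tendsto_const_nhds (x := Real.logb 2 β) (f := (atTop : Filter ℝ)) |>.sub
      (hi.div_const (1 - Real.exp (-β)))
    rw [htsum] at h
    have heq : ∀ γ : ℝ, Real.logb 2 β +
        (Real.logb 2 γ - thCapacity β γ / (1 - Real.exp (-β)))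
        = Real.logb 2 β -
          (thCapacity β γ - (1 - Real.exp (-β)) * Real.logb 2 γ) / (1 - Real.exp (-β)) := by
      intro γ
      field_simp
      ring
    have hval : Real.logb 2 β - (∑' k : ℕ, if 2 ≤ k then
          β ^ k * Real.exp (-β) / (Nat.factorial k : ℝ) * Real.logb 2 (k : ℝ) else 0)
          / (1 - Real.exp (-β))
        = Real.logb 2 β - (1 - Real.exp (-β))⁻¹ *
          ∑' k : ℕ, if 2 ≤ k then
            β ^ k * Real.exp (-β) / (Nat.factorial k : ℝ) * Real.logb 2 (k : ℝ) else 0 := by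
      rw [div_eq_inv_mul]
    rw [← hval]
    exact (h.congr fun γ => (heq γ).symm)
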